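/- Let $p$ be a prime and let $G$ be a finite abelian $p$-group that is not cyclic (equivalently, of rank at least $2$). Then the quotient ring $\mathbb{Z}_p[G]/I(G)$ is nonzero and satisfies $p = 0$; in particular it contains $p$-torsion, i.e., there is a nonzero element $x \in \mathbb{Z}_p[G]/I(G)$ with $p \cdot x = 0$ (for instance $x = 1$). (This is the $p$-adic $K$-theoretic input to the main theorem: $K_p^0(BA)/I_{tr}$ contains $p$-torsion when $\mathrm{rank}(A) \geq 2$.) -/

import Mathlib

open scoped Classical

/-- The norm element `N_H = ∑_{h ∈ H} h` of a subgroup `H` in the group algebra `R[G]`. -/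
noncomputable def normElt (R : Type*) [CommRing R] {G : Type*} [Group G] [Finite G]
    (H : Subgroup G) : MonoidAlgebra R G :=
  letI : Fintype H := Fintype.ofFinite H
  ∑ h : H, MonoidAlgebra.single (h : G) 1

/-- The norm ideal `I(G) ⊆ R[G]`, generated by the norm elements of all nontrivial
subgroups of `G`. -/
noncomputable def normIdeal (R : Type*) [CommRing R] (G : Type*) [Group G] [Finite G] :
    Ideal (MonoidAlgebra R G) :=
  Ideal.span {x | ∃ H : Subgroup G, H ≠ ⊥ ∧ x = normElt R H}

set_option linter.unusedSectionVars false

section AuxGroup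

open Subgroup

lemma exists_indep (p : ℕ) [Fact p.Prime] (G : Type*) [CommGroup G] [Finite G]
    (hG : IsPGroup p G) (hnc : ¬ IsCyclic G) :
    ∃ a b : G, orderOf a = p ∧ orderOf b = p ∧ b ∉ Subgroup.zpowers a := by
  have hp := (Fact.out : p.Prime)
  have hnt : Nontrivial G := by
    by_contra h
    rw [not_nontrivial_iff_subsingleton] at h
    exact hnc (isCyclic_of_subsingleton)
  obtain ⟨g, hg⟩ := Monoid.exists_orderOf_eq_exponent (G := G) (Monoid.ExponentExists.of_finite)
  obtain ⟨e, he⟩ := (IsPGroup.iff_orderOf.mp hG) g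
  have he1 : 1 ≤ e := by
    rcases Nat.eq_zero_or_pos e with h0 | h; swap; · exact h
    exfalso
    rw [h0, pow_zero] at he
    have hexp : Monoid.exponent G = 1 := by rw [← hg, he]
    obtain ⟨x, y, hxy⟩ := hnt
    exact hxy (by
      have hx := Monoid.pow_exponent_eq_one x
      have hy := Monoid.pow_exponent_eq_one y
      rw [hexp, pow_one] at hx hy; rw [hx, hy])
  have hee : p ^ (e - 1) * p = p ^ e := by
    rw [← pow_succ, Nat.sub_add_cancel he1]
  obtain ⟨h, hh⟩ : ∃ h : G, h ∉ zpowers g := by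
    by_contra hc
    push_neg at hc
    exact hnc ⟨⟨g, hc⟩⟩
  have hPex : ∃ j, h ^ p ^ j ∈ zpowers g := by
    obtain ⟨k, hk⟩ := (IsPGroup.iff_orderOf.mp hG) h
    exact ⟨k, by rw [← hk, pow_orderOf_eq_one]; exact one_mem _⟩
  classical
  set j := Nat.find hPex with hj
  have hjspec : h ^ p ^ j ∈ zpowers g := Nat.find_spec hPex
  have hj1 : 1 ≤ j := by
    rcases Nat.eq_zero_or_pos j with h0 | h1; swap; · exact h1
    exfalso; rw [h0, pow_zero, pow_one] at hjspec; exact hh hjspec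
  set h' := h ^ p ^ (j - 1) with hh'def
  have hh' : h' ∉ zpowers g := Nat.find_min hPex (by omega)
  have hh'p : h' ^ p ∈ zpowers g := by
    rw [hh'def, ← pow_mul, ← pow_succ, Nat.sub_add_cancel hj1]
    exact hjspec
  obtain ⟨m, hm⟩ := mem_zpowers_iff.mp hh'p
  have hord : (h') ^ p ^ e = 1 := by
    have h2 : orderOf h' ∣ p ^ e := by
      rw [← he, hg]; exact Monoid.order_dvd_exponent h'
    exact orderOf_dvd_iff_pow_eq_one.mp h2
  have hgm : g ^ (m * (p ^ (e - 1) : ℕ)) = 1 := by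
    have h3 : g ^ (m * (p ^ (e - 1) : ℕ)) = (h' ^ p) ^ (p ^ (e - 1)) := by
      rw [zpow_mul, hm, zpow_natCast]
    rw [h3, ← pow_mul, mul_comm, hee]
    exact hord
  have hdvd : ((p : ℤ) ^ e) ∣ m * (p ^ (e - 1) : ℕ) := by
    have h4 := orderOf_dvd_iff_zpow_eq_one.mpr hgm
    rw [he] at h4
    exact_mod_cast h4
  have hpm : (p : ℤ) ∣ m := by
    have hfac : ((p:ℤ) ^ e) = (p:ℤ) ^ (e - 1) * p := by
      rw [← pow_succ, Nat.sub_add_cancel he1]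
    rw [hfac] at hdvd
    push_cast at hdvd
    rw [mul_comm m _] at hdvd
    have hppos : (0:ℤ) < p := by exact_mod_cast hp.pos
    have hne : ((p:ℤ) ^ (e-1)) ≠ 0 := by positivity
    exact (mul_dvd_mul_iff_left hne).mp hdvd
  obtain ⟨m', hm'⟩ := hpm
  set b := h' * g ^ (-m') with hbdef
  have hbp : b ^ p = 1 := by
    have h1 : (g ^ (-m')) ^ p = g ^ (-m' * p) := by
      rw [← zpow_natCast (g ^ (-m')), ← zpow_mul]
    rw [hbdef, mul_pow, h1, ← hm, hm', ← zpow_add]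
    have h5 : (↑p * m' + -m' * ↑p : ℤ) = 0 := by ring
    rw [h5, zpow_zero]
  have hbz : b ∉ zpowers g := by
    intro hbin
    apply hh'
    have h6 : h' = b * g ^ m' := by rw [hbdef]; group
    rw [h6]
    exact mul_mem hbin (zpow_mem (mem_zpowers g) m')
  have hb1 : b ≠ 1 := by intro h1; rw [h1] at hbz; exact hbz (one_mem _)
  have hbord : orderOf b = p := orderOf_eq_prime hbp hb1
  refine ⟨g ^ (p ^ (e-1)), b, ?_, hbord, ?_⟩
  · apply orderOf_eq_prime
    · rw [← pow_mul, hee, ← he]; exact pow_orderOf_eq_one g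
    · intro h1
      have h7 := orderOf_dvd_of_pow_eq_one h1
      rw [he] at h7
      have h8 := Nat.le_of_dvd (Nat.pow_pos (n := e-1) hp.pos) h7
      have h9 : p ^ (e-1) < p ^ e := Nat.pow_lt_pow_right hp.one_lt (by omega)
      omega
  · intro hbin
    exact hbz (Subgroup.zpowers_le.mpr (pow_mem (mem_zpowers g) _) hbin)

end AuxGroup

section AuxAlg

open Subgroup

variable {p : ℕ} [Fact p.Prime] {G : Type*} [CommGroup G] [Finite G]

lemma zpowers_eq_zpowers {g h : G} (hp : orderOf g = p) (hh : h ∈ zpowers g) (h1 : h ≠ 1) :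
    zpowers h = zpowers g := by
  have hle : zpowers h ≤ zpowers g := zpowers_le.mpr hh
  have hhp : h ^ p = 1 := by
    obtain ⟨n, rfl⟩ := hh
    rw [← zpow_natCast, ← zpow_mul, mul_comm, zpow_mul, zpow_natCast, ← hp,
      pow_orderOf_eq_one, one_zpow]
  have hcard : Nat.card (zpowers h) = Nat.card (zpowers g) := by
    rw [Nat.card_zpowers, Nat.card_zpowers, hp, orderOf_eq_prime hhp h1]
  exact Subgroup.eq_of_le_of_card_ge hle (le_of_eq hcard.symm)

lemma mem_T_of_mem_zpowers {g h : G} (hg : g ^ p = 1) (hh : h ∈ zpowers g) : h ^ p = 1 := by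
  obtain ⟨n, rfl⟩ := hh
  rw [← zpow_natCast, ← zpow_mul, mul_comm, zpow_mul, zpow_natCast, hg, one_zpow]

section main
variable (p) (G) [Fintype G]

noncomputable def Tset : Finset G := Finset.univ.filter (fun g => g ^ p = 1 ∧ g ≠ 1)

variable {p G}

lemma normElt_eq (R : Type*) [CommRing R] (H : Subgroup G) :
    normElt R H = ∑ h ∈ (H : Set G).toFinset, MonoidAlgebra.single h (1 : R) := by
  rw [normElt, ← Finset.sum_set_coe (f := fun h => MonoidAlgebra.single h (1:R)) (H : Set G)]
  congr!

lemma toFinset_zpowers (g : G) (hg : g ∈ Tset p G) :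
    ((zpowers g : Subgroup G) : Set G).toFinset
      = insert 1 ((Tset p G).filter (· ∈ zpowers g)) := by
  rw [Finset.ext_iff]
  intro h
  simp only [Set.mem_toFinset, SetLike.mem_coe, Finset.mem_insert, Finset.mem_filter, Tset,
    Finset.mem_univ, true_and] at *
  constructor
  · intro hh
    by_cases h1 : h = 1
    · exact Or.inl h1
    · exact Or.inr ⟨⟨mem_T_of_mem_zpowers hg.1 hh, h1⟩, hh⟩
  · rintro (rfl | ⟨-, hh⟩)
    · exact one_mem _
    · exact hh

lemma filter_swap_eq (h : G) (hh : h ∈ Tset p G) :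
    (Tset p G).filter (fun g => h ∈ zpowers g) = (Tset p G).filter (· ∈ zpowers h) := by
  ext g
  simp only [Finset.mem_filter, Tset, Finset.mem_univ, true_and] at *
  constructor
  · rintro ⟨⟨hgp, hg1⟩, hmem⟩
    refine ⟨⟨hgp, hg1⟩, ?_⟩
    rw [zpowers_eq_zpowers (orderOf_eq_prime hgp hg1) hmem hh.2]
    exact mem_zpowers g
  · rintro ⟨⟨hgp, hg1⟩, hmem⟩
    refine ⟨⟨hgp, hg1⟩, ?_⟩
    rw [zpowers_eq_zpowers (orderOf_eq_prime hh.1 hh.2) hmem hg1]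
    exact mem_zpowers h

lemma card_filter (h : G) (hh : h ∈ Tset p G) :
    ((Tset p G).filter (· ∈ zpowers h)).card = p - 1 := by
  have h1 : (Tset p G).filter (· ∈ zpowers h)
      = ((zpowers h : Subgroup G) : Set G).toFinset.erase 1 := by
    ext g
    simp only [Finset.mem_filter, Finset.mem_erase, Set.mem_toFinset, SetLike.mem_coe, Tset,
      Finset.mem_univ, true_and]
    constructor
    · rintro ⟨⟨-, hg1⟩, hmem⟩; exact ⟨hg1, hmem⟩
    · rintro ⟨hg1, hmem⟩
      exact ⟨⟨mem_T_of_mem_zpowers ((Finset.mem_filter.mp hh).2.1) hmem, hg1⟩, hmem⟩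
  have hh' := (Finset.mem_filter.mp hh).2
  have h2 : Fintype.card ((zpowers h : Subgroup G) : Set G) = p := by
    rw [← Nat.card_eq_fintype_card]
    exact (Nat.card_zpowers h).trans (orderOf_eq_prime hh'.1 hh'.2)
  rw [h1, Finset.card_erase_of_mem (by simp [one_mem]), Set.toFinset_card, h2]

lemma key_sum (R : Type*) [CommRing R] :
    ∑ g ∈ Tset p G, normElt R (zpowers g)
      = (Tset p G).card • MonoidAlgebra.single (1:G) (1:R)
        + (p - 1) • ∑ h ∈ Tset p G, MonoidAlgebra.single h (1:R) := by
  have h1 : ∀ g ∈ Tset p G, normElt R (zpowers g)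
      = MonoidAlgebra.single (1:G) (1:R)
        + ∑ h ∈ (Tset p G).filter (· ∈ zpowers g), MonoidAlgebra.single h (1:R) := by
    intro g hg
    rw [normElt_eq, toFinset_zpowers g hg, Finset.sum_insert]
    intro hmem
    have := (Finset.mem_filter.mp ((Finset.mem_filter.mp hmem).1)).2.2
    exact this rfl
  rw [Finset.sum_congr rfl h1, Finset.sum_add_distrib, Finset.sum_const]
  congr 1
  rw [Finset.sum_comm' (s' := fun h => (Tset p G).filter (fun g => h ∈ zpowers g))
    (t' := Tset p G) (by intro g h; simp only [Finset.mem_filter]; tauto)]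
  rw [Finset.smul_sum]
  refine Finset.sum_congr rfl fun h hh => ?_
  rw [filter_swap_eq h hh, Finset.sum_const, card_filter h hh]

variable (p G) in
noncomputable def Omega : Subgroup G := (powMonoidHom p : G →* G).ker

lemma mem_Omega {g : G} : g ∈ Omega p G ↔ g ^ p = 1 := by
  rw [Omega, MonoidHom.mem_ker, powMonoidHom_apply]

lemma toFinset_Omega : ((Omega p G : Subgroup G) : Set G).toFinset = insert 1 (Tset p G) := by
  ext g
  simp only [Set.mem_toFinset, SetLike.mem_coe, Finset.mem_insert, Tset, Finset.mem_filter,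
    Finset.mem_univ, true_and, mem_Omega]
  by_cases h1 : g = 1 <;> simp [h1]

lemma normElt_Omega (R : Type*) [CommRing R] :
    normElt R (Omega p G)
      = MonoidAlgebra.single (1:G) (1:R) + ∑ h ∈ Tset p G, MonoidAlgebra.single h (1:R) := by
  rw [normElt_eq, toFinset_Omega, Finset.sum_insert]
  intro hmem
  exact (Finset.mem_filter.mp hmem).2.2 rfl

lemma card_Omega : Nat.card (Omega p G) = (Tset p G).card + 1 := by
  have h1 : Nat.card (Omega p G) = ((Omega p G : Subgroup G) : Set G).toFinset.card := by
    rw [Set.toFinset_card, ← Nat.card_eq_fintype_card]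
    rfl
  rw [h1, toFinset_Omega, Finset.card_insert_of_notMem]
  intro hmem
  exact (Finset.mem_filter.mp hmem).2.2 rfl

end main
end AuxAlg

section Final

open Subgroup

lemma p_mem_normIdeal (p : ℕ) [Fact p.Prime] (G : Type*) [CommGroup G] [Fintype G]
    (hG : IsPGroup p G) (hnc : ¬ IsCyclic G) :
    (p : MonoidAlgebra ℤ_[p] G) ∈ normIdeal ℤ_[p] G := by
  have hp := (Fact.out : p.Prime)
  set MA := MonoidAlgebra ℤ_[p] G
  set I := normIdeal ℤ_[p] G with hI
  obtain ⟨a, b, ha, hbord, hb⟩ := exists_indep p G hG hnc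
  have ha1 : a ≠ 1 := by
    intro h; rw [h, orderOf_one] at ha; exact hp.one_lt.ne' ha.symm
  have haO : a ∈ Omega p G := mem_Omega.mpr (by rw [← ha]; exact pow_orderOf_eq_one a)
  have hbO : b ∈ Omega p G := mem_Omega.mpr (by rw [← hbord]; exact pow_orderOf_eq_one b)
  -- the two norm-type elements are in the ideal
  have hM1 : ∑ g ∈ Tset p G, normElt ℤ_[p] (zpowers g) ∈ I := by
    refine Ideal.sum_mem _ fun g hg => Ideal.subset_span ?_
    refine ⟨zpowers g, ?_, rfl⟩
    rw [ne_eq, Subgroup.zpowers_eq_bot]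
    exact (Finset.mem_filter.mp hg).2.2
  have hM2 : normElt ℤ_[p] (Omega p G) ∈ I := by
    refine Ideal.subset_span ⟨Omega p G, ?_, rfl⟩
    intro hbot
    rw [hbot, Subgroup.mem_bot] at haO
    exact ha1 haO
  -- cardinality of Omega
  obtain ⟨k, hk⟩ : ∃ k, Nat.card (Omega p G) = p ^ k :=
    IsPGroup.iff_card.mp (hG.to_subgroup (Omega p G))
  have hk2 : 2 ≤ k := by
    by_contra hlt
    push_neg at hlt
    interval_cases k
    · rw [pow_zero] at hk
      have : (Omega p G : Subgroup G) = ⊥ := Subgroup.eq_bot_of_card_eq _ hk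
      rw [this, Subgroup.mem_bot] at haO
      exact ha1 haO
    · -- card Omega = p forces Omega = zpowers a, contradicting b
      rw [pow_one] at hk
      have hle : zpowers a ≤ Omega p G := zpowers_le.mpr haO
      have heq : zpowers a = Omega p G := by
        apply Subgroup.eq_of_le_of_card_ge hle
        rw [hk, Nat.card_zpowers, ha]
      rw [← heq] at hbO
      exact hb hbO
  -- translate the key sum identity into ideal membership
  set q := p - 1 with hq
  have hq1 : q + 1 = p := Nat.sub_add_cancel hp.one_le
  have hTcard : (Tset p G).card + 1 = p ^ k := by rw [← card_Omega, hk]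
  have hkey := key_sum (p := p) (G := G) ℤ_[p]
  have hOm := normElt_Omega (p := p) (G := G) ℤ_[p]
  -- express the T-sum via the Omega norm element
  have hTsum : ∑ h ∈ Tset p G, MonoidAlgebra.single h (1:ℤ_[p])
      = normElt ℤ_[p] (Omega p G) - 1 := by
    rw [hOm, MonoidAlgebra.one_def]; ring
  rw [hTsum, ← MonoidAlgebra.one_def] at hkey
  -- the scalar element
  have hX : ((Tset p G).card : MA) - (q : MA) ∈ I := by
    have h1 : ((Tset p G).card : MA) - (q : MA)
        = (∑ g ∈ Tset p G, normElt ℤ_[p] (zpowers g)) - (q : MA) * normElt ℤ_[p] (Omega p G) := by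
      rw [hkey]
      simp only [nsmul_eq_mul]
      ring
    rw [h1]
    exact Ideal.sub_mem _ hM1 (Ideal.mul_mem_left _ _ hM2)
  -- rewrite the scalar as p * unit
  set k' := k - 1 with hk'
  have hkk : k = k' + 1 := by omega
  have hZ : ((Tset p G).card : ℤ) - (q : ℤ) = p * ((p:ℤ) ^ k' - 1) := by
    have h1 : ((Tset p G).card : ℤ) + 1 = (p:ℤ) * (p:ℤ) ^ k' := by
      have h0 : (Tset p G).card + 1 = p * p ^ k' := by
        rw [hTcard, hkk, pow_succ]; ring
      exact_mod_cast h0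
    have h2 : (q : ℤ) + 1 = p := by exact_mod_cast hq1
    linarith [h1, h2]
  have hcastZ : ((Tset p G).card : MA) - (q : MA)
      = (p : MA) * (((p:ℤ) ^ k' - 1 : ℤ) : MA) := by
    have := congrArg (fun n : ℤ => (n : MA)) hZ
    push_cast at this ⊢
    convert this using 2 <;> push_cast <;> ring
  -- the unit
  have hu : IsUnit ((((p:ℤ) ^ k' - 1 : ℤ)) : ℤ_[p]) := by
    rw [PadicInt.isUnit_iff]
    refine le_antisymm (PadicInt.norm_le_one _) ?_
    by_contra hlt
    push_neg at hlt
    have hdvd := (PadicInt.norm_int_lt_one_iff_dvd _).mp hlt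
    have hk'1 : 1 ≤ k' := by omega
    have hpk : (p:ℤ) ∣ (p:ℤ) ^ k' := dvd_pow_self _ (by omega)
    have hone : (p:ℤ) ∣ 1 := by
      have h2 := dvd_sub hpk hdvd
      simpa using h2
    have h3 := Int.le_of_dvd one_pos hone
    have h4 := hp.two_le
    omega
  obtain ⟨u, huu⟩ := hu
  have hC : ((((p:ℤ) ^ k' - 1 : ℤ)) : MA)
      = MonoidAlgebra.single (1:G) ((((p:ℤ) ^ k' - 1 : ℤ)) : ℤ_[p]) := by
    rw [← map_intCast (MonoidAlgebra.singleOneRingHom (R := ℤ_[p]) (M := G))]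
    rfl
  have hfin : (p : MA) = (((Tset p G).card : MA) - (q : MA)) * MonoidAlgebra.single (1:G) ((↑u⁻¹ : ℤ_[p])) := by
    rw [hcastZ, hC, ← huu, mul_assoc, MonoidAlgebra.single_mul_single, mul_one, Units.mul_inv,
      ← MonoidAlgebra.one_def, mul_one]
  rw [hfin]
  exact Ideal.mul_mem_right _ _ hX

theorem quotient_by_norm_ideal_has_p_torsion (p : ℕ) [Fact p.Prime]
    (G : Type*) [CommGroup G] [Finite G] (hG : IsPGroup p G) (hnc : ¬ IsCyclic G) :
    Nontrivial (MonoidAlgebra ℤ_[p] G ⧸ normIdeal ℤ_[p] G) ∧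
      (p : MonoidAlgebra ℤ_[p] G ⧸ normIdeal ℤ_[p] G) = 0 ∧
      ∃ x : MonoidAlgebra ℤ_[p] G ⧸ normIdeal ℤ_[p] G,
        x ≠ 0 ∧ (p : MonoidAlgebra ℤ_[p] G ⧸ normIdeal ℤ_[p] G) * x = 0 := by
  have hp := (Fact.out : p.Prime)
  letI : Fintype G := Fintype.ofFinite G
  haveI := Nat.Prime.one_lt' p
  set I := normIdeal ℤ_[p] G with hI
  -- the augmentation mod p kills the norm ideal
  letI : Algebra ℤ_[p] (ZMod p) := (PadicInt.toZMod).toAlgebra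
  set φ := (MonoidAlgebra.lift ℤ_[p] (ZMod p) G) 1 with hφ
  have hker : I ≤ RingHom.ker (φ : MonoidAlgebra ℤ_[p] G →+* ZMod p) := by
    rw [hI, normIdeal, Ideal.span_le]
    rintro x ⟨H, hH, rfl⟩
    have hcard : (φ (normElt ℤ_[p] H) : ZMod p) = (Nat.card H : ZMod p) := by
      rw [normElt, hφ]
      rw [map_sum]
      simp only [MonoidAlgebra.lift_single, MonoidHom.one_apply, smul_eq_mul, mul_one]
      rw [Finset.sum_const, Nat.card_eq_fintype_card]
      letI : Fintype H := Fintype.ofFinite H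
      simp only [Finset.card_univ, one_smul, nsmul_eq_mul, mul_one]
      congr!
    have hdvd : p ∣ Nat.card H := by
      obtain ⟨m, hm⟩ := IsPGroup.iff_card.mp (hG.to_subgroup H)
      rcases Nat.eq_zero_or_pos m with h0 | h1
      · exfalso
        rw [h0, pow_zero] at hm
        exact hH (Subgroup.eq_bot_of_card_eq H hm)
      · exact hm ▸ dvd_pow_self p (by omega)
    have : (φ (normElt ℤ_[p] H) : ZMod p) = 0 := by
      rw [hcard, ZMod.natCast_eq_zero_iff]
      exact hdvd
    exact this
  have hne : I ≠ ⊤ := by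
    intro htop
    have h1 : (1 : MonoidAlgebra ℤ_[p] G) ∈ I := htop ▸ Submodule.mem_top
    have h2 : (φ 1 : ZMod p) = 0 := hker h1
    rw [map_one] at h2
    exact one_ne_zero h2
  haveI hquot : Nontrivial (MonoidAlgebra ℤ_[p] G ⧸ I) := Ideal.Quotient.nontrivial_iff.mpr hne
  have hpmem : (p : MonoidAlgebra ℤ_[p] G) ∈ I := p_mem_normIdeal p G hG hnc
  have hpzero : (p : MonoidAlgebra ℤ_[p] G ⧸ I) = 0 := by
    rw [← map_natCast (Ideal.Quotient.mk I) p]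
    exact Ideal.Quotient.eq_zero_iff_mem.mpr hpmem
  exact ⟨hquot, hpzero, 1, one_ne_zero, by rw [hpzero, zero_mul]⟩
end Final
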